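/- For fixed t ∈ [0,1) and z ∈ ℝ, the map r ↦ v_r(t,z) is Lipschitz continuous on ℝ, where v_r is the explicit value function for stopping a Brownian bridge with known pinning point r. -/

import Mathlib

open Real Set

/-- The standard normal cumulative distribution function. -/
noncomputable def Phi (x : ℝ) : ℝ :=
  (Real.sqrt (2 * Real.pi))⁻¹ * ∫ u in Set.Iic x, Real.exp (-u ^ 2 / 2)

/-- The value function for optimally stopping a Brownian bridge with known pinning point `r`. -/
noncomputable def vr (β r t z : ℝ) : ℝ :=
  if z < r + β * Real.sqrt (1 - t) then
    r + Real.sqrt (2 * Real.pi * (1 - t)) * (1 - β ^ 2) *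
      Real.exp ((z - r) ^ 2 / (2 * (1 - t))) * Phi ((z - r) / Real.sqrt (1 - t))
  else z

open MeasureTheory

lemma gauss_eq :
    (fun u : ℝ => Real.exp (-u ^ 2 / 2)) = (fun u : ℝ => Real.exp (-(1/2 : ℝ) * u ^ 2)) := by
  funext u; congr 1; ring

lemma gauss_integrable : Integrable (fun u : ℝ => Real.exp (-u ^ 2 / 2)) := by
  rw [gauss_eq]; exact integrable_exp_neg_mul_sq (by norm_num)

lemma gauss_total : ∫ u : ℝ, Real.exp (-u ^ 2 / 2) = Real.sqrt (2 * Real.pi) := by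
  rw [gauss_eq, integral_gaussian]; congr 1; ring

lemma sqrt_two_pi_pos : 0 < Real.sqrt (2 * Real.pi) :=
  Real.sqrt_pos.mpr (by positivity)

lemma Phi_nonneg (x : ℝ) : 0 ≤ Phi x := by
  unfold Phi
  apply mul_nonneg (inv_nonneg.mpr (Real.sqrt_nonneg _))
  exact setIntegral_nonneg measurableSet_Iic fun u _ => (Real.exp_pos _).le

lemma Phi_le_one (x : ℝ) : Phi x ≤ 1 := by
  unfold Phi
  have h := setIntegral_le_integral (s := Iic x) gauss_integrable
    (Filter.Eventually.of_forall fun u => (Real.exp_pos _).le)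
  rw [gauss_total] at h
  calc (Real.sqrt (2 * Real.pi))⁻¹ * ∫ u in Iic x, Real.exp (-u ^ 2 / 2)
      ≤ (Real.sqrt (2 * Real.pi))⁻¹ * Real.sqrt (2 * Real.pi) :=
        mul_le_mul_of_nonneg_left h (inv_nonneg.mpr (Real.sqrt_nonneg _))
    _ = 1 := inv_mul_cancel₀ sqrt_two_pi_pos.ne'

lemma Phi_pos (x : ℝ) : 0 < Phi x := by
  unfold Phi
  apply mul_pos (inv_pos.mpr sqrt_two_pi_pos)
  rw [setIntegral_pos_iff_support_of_nonneg_ae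
    (Filter.Eventually.of_forall fun u => (Real.exp_pos _).le) gauss_integrable.integrableOn]
  have hsupp : (Function.support fun u : ℝ => Real.exp (-u ^ 2 / 2)) = univ := by
    ext u; simp [Function.mem_support, (Real.exp_pos _).ne']
  rw [hsupp, univ_inter, Real.volume_Iic]
  exact ENNReal.zero_lt_top

lemma hasDerivAt_Phi (x : ℝ) :
    HasDerivAt Phi ((Real.sqrt (2 * Real.pi))⁻¹ * Real.exp (-x ^ 2 / 2)) x := by
  have key : Phi = fun y => (Real.sqrt (2 * Real.pi))⁻¹ *
      ((∫ u in (0:ℝ)..y, Real.exp (-u ^ 2 / 2)) + ∫ u in Iic (0:ℝ), Real.exp (-u ^ 2 / 2)) := by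
    funext y
    unfold Phi
    rw [← intervalIntegral.integral_Iic_sub_Iic gauss_integrable.integrableOn
      gauss_integrable.integrableOn]
    ring
  have h1 : HasDerivAt (fun y => ∫ u in (0:ℝ)..y, Real.exp (-u ^ 2 / 2))
      (Real.exp (-x ^ 2 / 2)) x := by
    have hcont : Continuous fun u : ℝ => Real.exp (-u ^ 2 / 2) := by continuity
    exact intervalIntegral.integral_hasDerivAt_right
      (gauss_integrable.intervalIntegrable)
      (hcont.stronglyMeasurableAtFilter _ _) hcont.continuousAt
  rw [key]
  exact ((h1.add_const _).const_mul _)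

lemma integral_exp_neg_mul_Ioi {a b : ℝ} (hb : 0 < b) :
    ∫ u in Ioi a, Real.exp (-b * u) = Real.exp (-b * a) / b := by
  have hd : ∀ u ∈ Ici a, HasDerivAt (fun u : ℝ => -(Real.exp (-b * u) / b))
      (Real.exp (-b * u)) u := by
    intro u _
    have h1 : HasDerivAt (fun u : ℝ => -b * u) (-b) u := by
      simpa using (hasDerivAt_id u).const_mul (-b)
    have h2 := ((h1.exp).div_const b).neg
    refine h2.congr_deriv ?_
    rw [mul_neg, neg_div, neg_neg, mul_div_assoc, div_self hb.ne', mul_one]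
  have htend : Filter.Tendsto (fun u : ℝ => -(Real.exp (-b * u) / b)) Filter.atTop (nhds 0) := by
    have h3 : Filter.Tendsto (fun u : ℝ => -b * u) Filter.atTop Filter.atBot :=
      Filter.Tendsto.const_mul_atTop_of_neg (neg_neg_iff_pos.mpr hb) Filter.tendsto_id
    have := (Real.tendsto_exp_atBot.comp h3).div_const b
    simpa using this.neg
  have := integral_Ioi_of_hasDerivAt_of_tendsto' hd (exp_neg_integrableOn_Ioi a hb) htend
  rw [this]; ring

lemma mills {b : ℝ} (hb : 0 < b) :
    ∫ u in Iic (-b), Real.exp (-u ^ 2 / 2) ≤ Real.exp (-b ^ 2 / 2) / b := by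
  have hflip : ∫ u in Iic (-b), Real.exp (-u ^ 2 / 2)
      = ∫ u in Ioi b, Real.exp (-u ^ 2 / 2) := by
    have h := integral_comp_neg_Iic (-b) (fun u => Real.exp (-u ^ 2 / 2))
    simp only [neg_sq, neg_neg] at h
    exact h
  rw [hflip]
  have hle : ∫ u in Ioi b, Real.exp (-u ^ 2 / 2)
      ≤ ∫ u in Ioi b, Real.exp (b ^ 2 / 2) * Real.exp (-b * u) := by
    apply setIntegral_mono_on gauss_integrable.integrableOn
      ((exp_neg_integrableOn_Ioi b hb).const_mul _) measurableSet_Ioi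
    intro u _
    rw [← Real.exp_add]
    apply Real.exp_le_exp.mpr
    nlinarith [sq_nonneg (u - b)]
  have hcalc : ∫ u in Ioi b, Real.exp (b ^ 2 / 2) * Real.exp (-b * u)
      = Real.exp (-b ^ 2 / 2) / b := by
    rw [MeasureTheory.integral_const_mul, integral_exp_neg_mul_Ioi hb, ← mul_div_assoc,
      ← Real.exp_add, show b ^ 2 / 2 + -b * b = -b ^ 2 / 2 by ring]
  linarith

lemma hasDerivAt_g (c x : ℝ) :
    HasDerivAt (fun x => c * (Real.exp (x ^ 2 / 2) * Phi x))
      (c * (x * Real.exp (x ^ 2 / 2) * Phi x + (Real.sqrt (2 * Real.pi))⁻¹)) x := by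
  have h1 : HasDerivAt (fun x : ℝ => x ^ 2 / 2) x x := by
    simpa using (hasDerivAt_pow 2 x).div_const 2
  have hexp : HasDerivAt (fun x : ℝ => Real.exp (x ^ 2 / 2)) (x * Real.exp (x ^ 2 / 2)) x := by
    simpa [mul_comm] using h1.exp
  have h2 := (hexp.mul (hasDerivAt_Phi x)).const_mul c
  have hprod : Real.exp (x ^ 2 / 2) * Real.exp (-x ^ 2 / 2) = 1 := by
    rw [← Real.exp_add, show x ^ 2 / 2 + -x ^ 2 / 2 = 0 by ring, Real.exp_zero]
  refine h2.congr_deriv ?_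
  linear_combination (c / Real.sqrt (2 * Real.pi)) * hprod

lemma B_lower {x : ℝ} : -(Real.sqrt (2 * Real.pi))⁻¹ ≤ x * Real.exp (x ^ 2 / 2) * Phi x := by
  rcases le_or_gt 0 x with hx0 | hx0
  · have : 0 ≤ x * Real.exp (x ^ 2 / 2) * Phi x :=
      mul_nonneg (mul_nonneg hx0 (Real.exp_pos _).le) (Phi_nonneg x)
    have h0 : (0:ℝ) ≤ (Real.sqrt (2 * Real.pi))⁻¹ := inv_nonneg.mpr (Real.sqrt_nonneg _)
    linarith
  · have hb : 0 < -x := by linarith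
    have hI := mills hb
    rw [neg_neg] at hI
    have hI' : ∫ u in Iic x, Real.exp (-u ^ 2 / 2) ≤ Real.exp (-x ^ 2 / 2) / (-x) := by
      simpa [neg_sq] using hI
    set I := ∫ u in Iic x, Real.exp (-u ^ 2 / 2) with hIdef
    have h1 : I * (-x) ≤ Real.exp (-x ^ 2 / 2) := (le_div_iff₀ hb).mp hI'
    have h2 : Real.exp (x ^ 2 / 2) * (I * (-x))
        ≤ Real.exp (x ^ 2 / 2) * Real.exp (-x ^ 2 / 2) :=
      mul_le_mul_of_nonneg_left h1 (Real.exp_pos _).le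
    have hprod : Real.exp (x ^ 2 / 2) * Real.exp (-x ^ 2 / 2) = 1 := by
      rw [← Real.exp_add, show x ^ 2 / 2 + -x ^ 2 / 2 = 0 by ring, Real.exp_zero]
    rw [hprod] at h2
    have h3 : Real.exp (x ^ 2 / 2) * (I * (-x)) * (Real.sqrt (2 * Real.pi))⁻¹
        ≤ 1 * (Real.sqrt (2 * Real.pi))⁻¹ :=
      mul_le_mul_of_nonneg_right h2 (inv_nonneg.mpr (Real.sqrt_nonneg _))
    have h4 : Phi x = (Real.sqrt (2 * Real.pi))⁻¹ * I := rfl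
    rw [h4]
    nlinarith [h3]

lemma B_upper {β x : ℝ} (hβ : 0 < β) (hx : x ≤ β) :
    x * Real.exp (x ^ 2 / 2) * Phi x ≤ β * Real.exp (β ^ 2 / 2) := by
  rcases le_or_gt x 0 with hx0 | hx0
  · have h1 : x * Real.exp (x ^ 2 / 2) ≤ 0 :=
      mul_nonpos_of_nonpos_of_nonneg hx0 (Real.exp_pos _).le
    have h2 : x * Real.exp (x ^ 2 / 2) * Phi x ≤ 0 :=
      mul_nonpos_of_nonpos_of_nonneg h1 (Phi_nonneg x)
    nlinarith [Real.exp_pos (β ^ 2 / 2)]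
  · have he : Real.exp (x ^ 2 / 2) ≤ Real.exp (β ^ 2 / 2) :=
      Real.exp_le_exp.mpr (by nlinarith)
    calc x * Real.exp (x ^ 2 / 2) * Phi x
        ≤ x * Real.exp (x ^ 2 / 2) * 1 :=
          mul_le_mul_of_nonneg_left (Phi_le_one x)
            (mul_nonneg hx0.le (Real.exp_pos _).le)
      _ = x * Real.exp (x ^ 2 / 2) := mul_one _
      _ ≤ β * Real.exp (β ^ 2 / 2) :=
          mul_le_mul hx he (Real.exp_pos _).le hβ.le

lemma deriv_bound {β : ℝ} (hβ : 0 < β) (hβ1 : β ^ 2 < 1) {x : ℝ} (hx : x ≤ β) :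
    |Real.sqrt (2 * Real.pi) * (1 - β ^ 2) *
        (x * Real.exp (x ^ 2 / 2) * Phi x + (Real.sqrt (2 * Real.pi))⁻¹)|
      ≤ Real.sqrt (2 * Real.pi) * (1 - β ^ 2) *
        (β * Real.exp (β ^ 2 / 2) + (Real.sqrt (2 * Real.pi))⁻¹) := by
  have hc : 0 ≤ Real.sqrt (2 * Real.pi) * (1 - β ^ 2) :=
    mul_nonneg (Real.sqrt_nonneg _) (by linarith)
  have h1 := B_lower (x := x)
  have h2 := B_upper hβ hx
  rw [abs_of_nonneg (mul_nonneg hc (by linarith))]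
  exact mul_le_mul_of_nonneg_left (by linarith) hc

lemma g_lip {β : ℝ} (hβ : 0 < β) (hβ1 : β ^ 2 < 1) {x y : ℝ} (hx : x ≤ β) (hy : y ≤ β) :
    |Real.sqrt (2 * Real.pi) * (1 - β ^ 2) * (Real.exp (y ^ 2 / 2) * Phi y)
      - Real.sqrt (2 * Real.pi) * (1 - β ^ 2) * (Real.exp (x ^ 2 / 2) * Phi x)|
    ≤ (Real.sqrt (2 * Real.pi) * (1 - β ^ 2) *
        (β * Real.exp (β ^ 2 / 2) + (Real.sqrt (2 * Real.pi))⁻¹)) * |y - x| := by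
  have := Convex.norm_image_sub_le_of_norm_hasDerivWithin_le
    (f := fun x => Real.sqrt (2 * Real.pi) * (1 - β ^ 2) * (Real.exp (x ^ 2 / 2) * Phi x))
    (f' := fun x => Real.sqrt (2 * Real.pi) * (1 - β ^ 2) *
      (x * Real.exp (x ^ 2 / 2) * Phi x + (Real.sqrt (2 * Real.pi))⁻¹))
    (fun u _ => (hasDerivAt_g _ u).hasDerivWithinAt)
    (fun u hu => by rw [Real.norm_eq_abs]; exact deriv_bound hβ hβ1 hu)
    (convex_Iic β) (mem_Iic.mpr hx) (mem_Iic.mpr hy)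
  simpa [Real.norm_eq_abs] using this

lemma glue {f : ℝ → ℝ} {a K : ℝ}
    (h1 : ∀ x ∈ Iic a, ∀ y ∈ Iic a, |f x - f y| ≤ K * |x - y|)
    (h2 : ∀ x ∈ Ici a, ∀ y ∈ Ici a, |f x - f y| ≤ K * |x - y|) :
    ∀ x y, |f x - f y| ≤ K * |x - y| := by
  have main : ∀ x y, x ≤ a → a ≤ y → |f x - f y| ≤ K * |x - y| := by
    intro x y hx hy
    have e1 := h1 x hx a (mem_Iic.mpr le_rfl)
    have e2 := h2 a (mem_Ici.mpr le_rfl) y hy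
    calc |f x - f y| ≤ |f x - f a| + |f a - f y| := abs_sub_le _ _ _
      _ ≤ K * |x - a| + K * |a - y| := add_le_add e1 e2
      _ = K * ((a - x) + (y - a)) := by
          rw [abs_of_nonpos (by linarith), abs_of_nonpos (by linarith)]; ring
      _ = K * |x - y| := by rw [abs_of_nonpos (by linarith)]; ring
  intro x y
  rcases le_total x a with hx | hx <;> rcases le_total y a with hy | hy
  · exact h1 x (mem_Iic.mpr hx) y (mem_Iic.mpr hy)
  · exact main x y hx hy
  · rw [abs_sub_comm (f x) (f y), abs_sub_comm x y]; exact main y x hy hx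
  · exact h2 x (mem_Ici.mpr hx) y (mem_Ici.mpr hy)

theorem stmt3 (β t z : ℝ) (hβ : 0 < β)
    (hroot : Real.sqrt (2 * Real.pi) * (1 - β ^ 2) * Real.exp (β ^ 2 / 2) * Phi β = β)
    (ht : t ∈ Set.Ico (0 : ℝ) 1) :
    ∃ L : NNReal, LipschitzWith L (fun r => vr β r t z) := by
  obtain ⟨ht0, ht1⟩ := ht
  have hEpos := sqrt_two_pi_pos
  have hβ1 : β ^ 2 < 1 := by
    by_contra hcon
    push_neg at hcon
    nlinarith [mul_pos (mul_pos hEpos (Real.exp_pos (β ^ 2 / 2))) (Phi_pos β)]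
  set s := Real.sqrt (1 - t) with hsdef
  have hspos : 0 < s := Real.sqrt_pos.mpr (by linarith)
  have hs2 : s ^ 2 = 1 - t := Real.sq_sqrt (by linarith)
  set a := z - β * s with hadef
  set K0 : ℝ := Real.sqrt (2 * Real.pi) * (1 - β ^ 2) *
      (β * Real.exp (β ^ 2 / 2) + (Real.sqrt (2 * Real.pi))⁻¹) with hK0def
  have hK0 : 0 ≤ K0 := by
    rw [hK0def]
    have h1 : 0 ≤ (1 : ℝ) - β ^ 2 := by linarith
    have h2 : 0 ≤ β * Real.exp (β ^ 2 / 2) + (Real.sqrt (2 * Real.pi))⁻¹ := by positivity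
    positivity
  set K : ℝ := 1 + K0 with hKdef
  have hKnn : 0 ≤ K := by rw [hKdef]; linarith
  have hIic : ∀ r ∈ Iic a, vr β r t z = z := by
    intro r hr
    have hr' : r ≤ a := mem_Iic.mp hr
    unfold vr
    rw [← hsdef, if_neg (not_lt.mpr (by rw [hadef] at hr'; linarith))]
  have key : ∀ r ∈ Ici a, vr β r t z = r + s * (Real.sqrt (2 * Real.pi) * (1 - β ^ 2) *
      (Real.exp (((z - r) / s) ^ 2 / 2) * Phi ((z - r) / s))) := by
    intro r hr
    rcases eq_or_lt_of_le (mem_Ici.mp hr) with heq | hlt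
    · have hx : (z - r) / s = β := by
        rw [← heq, hadef]; field_simp; ring
      rw [hx]
      have hgβ : Real.sqrt (2 * Real.pi) * (1 - β ^ 2) *
          (Real.exp (β ^ 2 / 2) * Phi β) = β := by linear_combination hroot
      rw [hgβ]
      unfold vr
      rw [← hsdef, if_neg (not_lt.mpr (le_of_eq (by rw [← heq, hadef]; ring)))]
      rw [← heq, hadef]; ring
    · have hcond : z < r + β * s := by rw [hadef] at hlt; linarith
      unfold vr
      rw [← hsdef, if_pos hcond]
      have hsqrt : Real.sqrt (2 * Real.pi * (1 - t)) = Real.sqrt (2 * Real.pi) * s := by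
        rw [hsdef]; exact Real.sqrt_mul (by positivity) _
      have hexp : (z - r) ^ 2 / (2 * (1 - t)) = ((z - r) / s) ^ 2 / 2 := by
        rw [div_pow, hs2, div_div]; congr 1; ring
      rw [hsqrt, hexp]; ring
  have h1 : ∀ x ∈ Iic a, ∀ y ∈ Iic a,
      |vr β x t z - vr β y t z| ≤ K * |x - y| := by
    intro x hx y hy
    rw [hIic x hx, hIic y hy, sub_self, abs_zero]
    exact mul_nonneg hKnn (abs_nonneg _)
  have h2 : ∀ x ∈ Ici a, ∀ y ∈ Ici a,
      |vr β x t z - vr β y t z| ≤ K * |x - y| := by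
    intro x hx y hy
    have hx' : (z - x) / s ≤ β := by
      rw [div_le_iff₀ hspos]
      have := mem_Ici.mp hx
      rw [hadef] at this; linarith
    have hy' : (z - y) / s ≤ β := by
      rw [div_le_iff₀ hspos]
      have := mem_Ici.mp hy
      rw [hadef] at this; linarith
    rw [key x hx, key y hy]
    have hg := g_lip hβ hβ1 hy' hx'
    have habs : |(z - x) / s - (z - y) / s| = |x - y| / s := by
      rw [show (z - x) / s - (z - y) / s = (y - x) / s by ring, abs_div,
        abs_of_pos hspos, abs_sub_comm]
    rw [habs, ← hK0def] at hg
    set Gx := Real.sqrt (2 * Real.pi) * (1 - β ^ 2) *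
      (Real.exp (((z - x) / s) ^ 2 / 2) * Phi ((z - x) / s)) with hGx
    set Gy := Real.sqrt (2 * Real.pi) * (1 - β ^ 2) *
      (Real.exp (((z - y) / s) ^ 2 / 2) * Phi ((z - y) / s)) with hGy
    calc |x + s * Gx - (y + s * Gy)|
        = |(x - y) + s * (Gx - Gy)| := by ring_nf
      _ ≤ |x - y| + |s * (Gx - Gy)| := abs_add_le _ _
      _ = |x - y| + s * |Gx - Gy| := by rw [abs_mul, abs_of_pos hspos]
      _ ≤ |x - y| + s * (K0 * (|x - y| / s)) := by
          have := mul_le_mul_of_nonneg_left hg hspos.le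
          linarith
      _ = K * |x - y| := by rw [hKdef]; field_simp
  refine ⟨Real.toNNReal K, ?_⟩
  rw [lipschitzWith_iff_dist_le_mul]
  intro x y
  simp only [Real.dist_eq]
  rw [Real.coe_toNNReal K hKnn]
  exact glue h1 h2 x y
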